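/- Let H be a bounded self-adjoint operator on a Hilbert space, η > 0, B a bounded operator with ‖B‖ ≤ η/2, and H_f = H + B. Then (H_f* − iη)(H_f + iη) ≥ (1/2)(H² + η²/2) as quadratic forms. -/

import Mathlib

open Complex

theorem stmt19 {H : Type*} [NormedAddCommGroup H] [InnerProductSpace ℂ H] [CompleteSpace H]
    (A B : H →L[ℂ] H) (hA : IsSelfAdjoint A) (η : ℝ) (hη : 0 < η)
    (hB : ‖B‖ ≤ η / 2) :
    ∀ ψ : H, (1 / 2) * ‖A ψ‖ ^ 2 + η ^ 2 / 4 * ‖ψ‖ ^ 2 ≤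
      ‖(A + B) ψ + (((η : ℂ) * Complex.I) • ψ)‖ ^ 2 := by
  intro ψ
  have hreal : (inner ℂ (A ψ) ψ : ℂ) = (starRingEnd ℂ) (inner ℂ (A ψ) ψ) := by
    rw [inner_conj_symm]
    exact hA.isSymmetric ψ ψ
  have him : (inner ℂ (A ψ) ψ : ℂ).im = 0 := Complex.conj_eq_iff_im.mp hreal.symm
  have hkey : ‖A ψ + (((η : ℂ) * Complex.I) • ψ)‖ ^ 2 = ‖A ψ‖ ^ 2 + η ^ 2 * ‖ψ‖ ^ 2 := by
    rw [@norm_add_sq ℂ]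
    have h1 : (inner ℂ (A ψ) ((((η : ℂ) * Complex.I)) • ψ) : ℂ) =
        ((η : ℂ) * Complex.I) * inner ℂ (A ψ) ψ := inner_smul_right _ _ _
    have h2 : RCLike.re (inner ℂ (A ψ) ((((η : ℂ) * Complex.I)) • ψ) : ℂ) = 0 := by
      rw [h1]
      simp [Complex.mul_re, Complex.mul_im, him]
    rw [h2, norm_smul]
    simp [abs_of_pos hη]
    ring
  have hBψ : ‖B ψ‖ ≤ (η / 2) * ‖ψ‖ := by
    calc ‖B ψ‖ ≤ ‖B‖ * ‖ψ‖ := B.le_opNorm ψ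
    _ ≤ (η / 2) * ‖ψ‖ := by gcongr
  have hsplit : (A + B) ψ + (((η : ℂ) * Complex.I) • ψ) =
      (A ψ + (((η : ℂ) * Complex.I) • ψ)) + B ψ := by
    simp [ContinuousLinearMap.add_apply]; abel
  rw [hsplit]
  set u := A ψ + (((η : ℂ) * Complex.I) • ψ) with hu_def
  have hbge : η * ‖ψ‖ ≤ ‖u‖ := by
    nlinarith [hkey, norm_nonneg u, sq_nonneg (‖A ψ‖), mul_nonneg hη.le (norm_nonneg ψ)]
  have huB : ‖B ψ‖ ≤ ‖u‖ := by nlinarith [hBψ, hbge, mul_nonneg hη.le (norm_nonneg ψ)]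
  have hlow : ‖u‖ - ‖B ψ‖ ≤ ‖u + B ψ‖ := by
    have h := norm_add_le (u + B ψ) (-(B ψ))
    simp only [add_neg_cancel_right, norm_neg] at h
    linarith
  have h2 : (‖u‖ - ‖B ψ‖) ^ 2 ≤ ‖u + B ψ‖ ^ 2 := by
    have h0 : 0 ≤ ‖u‖ - ‖B ψ‖ := by linarith
    nlinarith [norm_nonneg (u + B ψ)]
  have hbs : η * ‖ψ‖ * ‖u‖ ≤ ‖A ψ‖ ^ 2 / 2 + η ^ 2 * ‖ψ‖ ^ 2 := by
    nlinarith [hkey, sq_nonneg (‖A ψ‖ ^ 2 / 2 + η ^ 2 * ‖ψ‖ ^ 2 - η * ‖ψ‖ * ‖u‖),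
      sq_nonneg (η * ‖ψ‖), sq_nonneg ‖A ψ‖,
      mul_nonneg (mul_nonneg hη.le (norm_nonneg ψ)) (norm_nonneg u),
      sq_nonneg (‖A ψ‖ * (η * ‖ψ‖)), sq_nonneg (‖A ψ‖ ^ 2)]
  have hsq : (‖u‖ - η * ‖ψ‖ / 2) ^ 2 ≤ (‖u‖ - ‖B ψ‖) ^ 2 := by
    nlinarith [hBψ, hbge, norm_nonneg (B ψ), huB]
  nlinarith [h2, hsq, hbs, hkey]
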